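/- Let L be an invertible sheaf modeled combinatorially as follows: assign to each subcurve Z of C the number deg_Z L, additive over disjoint components. Suppose L is semistable at every subcurve Z (|deg_Z L_Z| ≤ k_Z/2) and C_1-quasistable at every tail of C (i.e. β_L(Z) := deg_Z L + k_Z/2 > 0 whenever C_1 ⊆ Z, for Z a tail). If moreover for every subcurve Z, deg_Z L = −deg_{Z^c} L, then L is C_1-quasistable at every subcurve Z whose connected components are tails at which L is C_1-quasistable; in particular, an invertible sheaf that is C_1-quasistable at the connected components of a subcurve Z is C_1-quasistable at Z. -/

import Mathlib

open Set

/- Dual multigraph model of a nodal curve: vertices `V` are irreducible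
components, edges `E` are nodes, with endpoint maps `s t : E → V`. -/

/-- The set of terminal points (edges of the cut) of a vertex subset `Z`. -/
def TermPts {V E : Type} (s t : E → V) (Z : Set V) : Set E :=
  {e | (s e ∈ Z ∧ t e ∉ Z) ∨ (t e ∈ Z ∧ s e ∉ Z)}

/-- A subcurve is a nonempty proper subset of the components. -/
def Subcurve {V : Type} (Z : Set V) : Prop := Z.Nonempty ∧ Z ≠ Set.univ

/-- Connectivity of the induced sub-multigraph on `Z`. -/
def ConnOn {V E : Type} (s t : E → V) (Z : Set V) : Prop :=
  ∀ x ∈ Z, ∀ y ∈ Z,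
    Relation.ReflTransGen
      (fun a b => a ∈ Z ∧ b ∈ Z ∧ ∃ e, (s e = a ∧ t e = b) ∨ (s e = b ∧ t e = a)) x y

/-- A tail is a subcurve with both sides connected. -/
def IsTail {V E : Type} (s t : E → V) (Z : Set V) : Prop :=
  Subcurve Z ∧ ConnOn s t Z ∧ ConnOn s t Zᶜ

/-- `k_Z`, the number of terminal points of `Z`. -/
noncomputable def kcut {V E : Type} (s t : E → V) (Z : Set V) : ℕ :=
  (TermPts s t Z).ncard

/-- The pair `(Z, Z')` is free if the edge cuts are disjoint. -/
def FreePair {V E : Type} (s t : E → V) (Z Z' : Set V) : Prop :=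
  TermPts s t Z ∩ TermPts s t Z' = ∅

/-- The pair `(Z, Z')` is perfect. -/
def PerfectPair {V : Type} (Z Z' : Set V) : Prop :=
  Z ⊆ Z' ∨ Z' ⊆ Z ∨ Zᶜ ⊆ Z' ∨ Z' ⊆ Zᶜ

/-- `Y` is a connected component of the subcurve `Z`. -/
def IsCompOf {V E : Type} (s t : E → V) (Y Z : Set V) : Prop :=
  Y.Nonempty ∧ Y ⊆ Z ∧ ConnOn s t Y ∧
    ∀ Y' : Set V, Y ⊆ Y' → Y' ⊆ Z → ConnOn s t Y' → Y' = Y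

/-- `C_1`-quasistability of a degree function at a subcurve `Z`:
`|deg Z| ≤ k_Z / 2`, and `deg Z + k_Z / 2 > 0` whenever `v1 ∈ Z`. -/
def QuasiAt {V E : Type} (s t : E → V) (v1 : V) (deg : Set V → ℤ) (Z : Set V) :
    Prop :=
  2 * |deg Z| ≤ (kcut s t Z : ℤ) ∧ (v1 ∈ Z → 0 < 2 * deg Z + (kcut s t Z : ℤ))

/-- Auxiliary: the edge relation restricted to a vertex set. -/
def EdgeRel {V E : Type} (s t : E → V) (Z : Set V) (a b : V) : Prop :=
  a ∈ Z ∧ b ∈ Z ∧ ∃ e, (s e = a ∧ t e = b) ∨ (s e = b ∧ t e = a)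

lemma edgeRel_symm {V E : Type} (s t : E → V) (Z : Set V) : Symmetric (EdgeRel s t Z) := by
  rintro a b ⟨ha, hb, e, h⟩
  exact ⟨hb, ha, e, h.symm⟩

lemma edgeRel_mono {V E : Type} (s t : E → V) {Z Z' : Set V} (h : Z ⊆ Z') :
    ∀ a b, EdgeRel s t Z a b → EdgeRel s t Z' a b := by
  rintro a b ⟨ha, hb, he⟩
  exact ⟨h ha, h hb, he⟩

/-- Reachability from `v1` within `Z` stays inside the reachable set. -/
lemma reach_sub {V E : Type} (s t : E → V) (Z : Set V) (v1 : V) {x : V}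
    (hx : Relation.ReflTransGen (EdgeRel s t Z) v1 x) :
    Relation.ReflTransGen
      (EdgeRel s t {y | y ∈ Z ∧ Relation.ReflTransGen (EdgeRel s t Z) v1 y}) v1 x := by
  induction hx with
  | refl => exact .refl
  | @tail b c hpath hstep ih =>
    exact ih.tail ⟨⟨hstep.1, hpath⟩, ⟨hstep.2.1, hpath.tail hstep⟩, hstep.2.2⟩

/-- The reachable set from `v1` within `Z` is a connected component of `Z`. -/
lemma comp_of {V E : Type} (s t : E → V) (Z : Set V) (v1 : V) (hv1 : v1 ∈ Z) :
    IsCompOf s t {x | x ∈ Z ∧ Relation.ReflTransGen (EdgeRel s t Z) v1 x} Z := by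
  set Y := {x | x ∈ Z ∧ Relation.ReflTransGen (EdgeRel s t Z) v1 x} with hYdef
  refine ⟨⟨v1, hv1, .refl⟩, fun x hx => hx.1, ?_, ?_⟩
  · intro x hx y hy
    have px := reach_sub s t Z v1 hx.2
    have py := reach_sub s t Z v1 hy.2
    exact ((haveI : Std.Symm (EdgeRel s t Y) := ⟨edgeRel_symm s t Y⟩; Std.Symm.symm _ _ px : Relation.ReflTransGen (EdgeRel s t Y) x v1)).trans py
  · intro Y' hYY' hY'Z hconn
    apply Set.Subset.antisymm _ hYY'
    intro x hx
    have hv1' : v1 ∈ Y' := hYY' ⟨hv1, .refl⟩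
    have := hconn v1 hv1' x hx
    exact ⟨hY'Z hx, Relation.ReflTransGen.mono (edgeRel_mono s t hY'Z) _ _ this⟩

set_option maxHeartbeats 1000000 in
/-- Second step of Proposition 6.2: a degree-0 line bundle, semistable at every
subcurve and `C_1`-quasistable at every tail, is `C_1`-quasistable at every
subcurve whose connected components are tails at which it is
`C_1`-quasistable. -/
theorem stmt_17 {V E : Type} [Fintype V] [Fintype E] (s t : E → V)
    (hC : ConnOn s t Set.univ) (v1 : V) (deg : Set V → ℤ)
    (hadd : ∀ Z Z' : Set V, Z ∩ Z' = ∅ → deg (Z ∪ Z') = deg Z + deg Z')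
    (hdeg0 : ∀ Z : Set V, Subcurve Z → deg Z = - deg Zᶜ)
    (hss : ∀ Z : Set V, Subcurve Z → 2 * |deg Z| ≤ (kcut s t Z : ℤ))
    (hqs : ∀ Z : Set V, IsTail s t Z → QuasiAt s t v1 deg Z) :
    ∀ Z : Set V, Subcurve Z →
      (∀ Y : Set V, IsCompOf s t Y Z →
        IsTail s t Y ∧ QuasiAt s t v1 deg Y) →
      QuasiAt s t v1 deg Z := by
  intro Z hZ hcomp
  refine ⟨hss Z hZ, ?_⟩
  intro hv1
  set Y := {x | x ∈ Z ∧ Relation.ReflTransGen (EdgeRel s t Z) v1 x} with hYdef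
  have hYcomp : IsCompOf s t Y Z := comp_of s t Z v1 hv1
  have hYZ : Y ⊆ Z := fun x hx => hx.1
  have hv1Y : v1 ∈ Y := ⟨hv1, .refl⟩
  obtain ⟨-, hqY⟩ := hcomp Y hYcomp
  have hposY : 0 < 2 * deg Y + (kcut s t Y : ℤ) := hqY.2 hv1Y
  -- Y is closed under the edge relation within Z
  have hclosed : ∀ a b, EdgeRel s t Z a b → a ∈ Y → b ∈ Y :=
    fun a b hab ha => ⟨hab.2.1, ha.2.tail hab⟩
  clear hYdef
  clear_value Y
  set W := Z \ Y with hWdef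
  by_cases hWe : W = ∅
  · have hZY : Z = Y := by
      apply Set.Subset.antisymm _ hYZ
      intro x hx
      by_contra hxY
      exact absurd (Set.mem_diff_of_mem hx hxY) (by rw [← hWdef, hWe]; exact id)
    rw [hZY]; exact hposY
  -- W is a nonempty proper subcurve
  have hWne : W.Nonempty := Set.nonempty_iff_ne_empty.mpr hWe
  have hWZ : W ⊆ Z := Set.diff_subset
  have hWsub : Subcurve W := by
    refine ⟨hWne, fun h => hZ.2 ?_⟩
    apply Set.eq_univ_of_univ_subset
    rw [← h]; exact hWZ
  have hssW := hss W hWsub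
  have hposW : 0 ≤ 2 * deg W + (kcut s t W : ℤ) := by
    have := neg_abs_le (deg W)
    linarith
  -- degree additivity
  have hYWdisj : Y ∩ W = ∅ := by
    ext x; simp only [Set.mem_inter_iff, hWdef, Set.mem_diff, Set.mem_empty_iff_false,
      iff_false, not_and]
    tauto
  have hYWunion : Y ∪ W = Z := by
    ext x
    simp only [Set.mem_union, hWdef, Set.mem_diff]
    constructor
    · rintro (h | h); exacts [hYZ h, h.1]
    · intro h; by_cases hxY : x ∈ Y
      · exact Or.inl hxY
      · exact Or.inr ⟨h, hxY⟩
  have hdegadd : deg Z = deg Y + deg W := by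
    rw [← hYWunion]; exact hadd Y W hYWdisj
  -- cut additivity: TermPts Z = TermPts Y ⊔ TermPts W
  have hclS : ∀ e : E, s e ∈ Y → t e ∈ Z → t e ∈ Y := by
    intro e h1 h2
    exact hclosed (s e) (t e) ⟨hYZ h1, h2, e, Or.inl ⟨rfl, rfl⟩⟩ h1
  have hclT : ∀ e : E, t e ∈ Y → s e ∈ Z → s e ∈ Y := by
    intro e h1 h2
    exact hclosed (t e) (s e) ⟨hYZ h1, h2, e, Or.inr ⟨rfl, rfl⟩⟩ h1
  have hTP : TermPts s t Z = TermPts s t Y ∪ TermPts s t W := by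
    ext e
    have h1 := hclS e
    have h2 := hclT e
    have h3 : s e ∈ Y → s e ∈ Z := @hYZ (s e)
    have h4 : t e ∈ Y → t e ∈ Z := @hYZ (t e)
    simp only [TermPts, Set.mem_union, Set.mem_setOf_eq, hWdef, Set.mem_diff]
    tauto
  have hTPdisj : Disjoint (TermPts s t Y) (TermPts s t W) := by
    rw [Set.disjoint_left]
    intro e he he'
    have h1 := hclS e
    have h2 := hclT e
    have h3 : s e ∈ Y → s e ∈ Z := @hYZ (s e)
    have h4 : t e ∈ Y → t e ∈ Z := @hYZ (t e)
    simp only [TermPts, Set.mem_setOf_eq, hWdef, Set.mem_diff] at he he'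
    tauto
  have hkadd : (kcut s t Z : ℤ) = (kcut s t Y : ℤ) + (kcut s t W : ℤ) := by
    have : kcut s t Z = kcut s t Y + kcut s t W := by
      unfold kcut
      rw [hTP, Set.ncard_union_eq hTPdisj (Set.toFinite _) (Set.toFinite _)]
    rw [this]; push_cast; ring
  rw [hdegadd, hkadd]
  linarith
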